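/- Let (α_n)_{n≥1} be positive reals and (γ_n)_{n≥1} positive with Σ γ_n = 1. Suppose for each n, h_n : [0,∞) → [0,∞) satisfies h_n(t) ≤ 2 e^{-α_n t}. Then H(t) := Σ_n γ_n h_n(t) satisfies H(t) ≤ 2 Σ_n γ_n e^{-α_n t}. Moreover, if α_n = 1/n and γ_n = c·n^{-γ-1} (with normalizing c > 0, γ > 0), then Σ_n γ_n e^{-α_n t} ≤ C (1+t)^{-γ} for some constant C depending on γ. -/

import Mathlib

private lemma aux_pow_le_exp (n : ℕ) (x : ℝ) (hx : 0 ≤ x) :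
    x ^ n ≤ n.factorial * Real.exp x := by
  have h1 : x ^ n / n.factorial ≤ Real.exp x := by
    calc x ^ n / n.factorial
        ≤ ∑ i ∈ Finset.range (n+1), x ^ i / i.factorial := by
          refine Finset.single_le_sum (f := fun i => x ^ i / i.factorial) ?_ (Finset.self_mem_range_succ n)
          intro i _
          positivity
      _ ≤ Real.exp x := Real.sum_le_exp_of_nonneg hx _
  have hfac : (0:ℝ) < n.factorial := by positivity
  rw [div_le_iff₀ hfac] at h1
  linarith [h1]

private lemma aux_exp_decay (g : ℝ) (hg : 0 < g) :
    ∃ K : ℝ, 0 < K ∧ ∀ x : ℝ, 0 ≤ x →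
      Real.exp (-x) ≤ K * (1 + x) ^ (-(g + 1)) := by
  set m : ℕ := ⌈g⌉₊ + 1 with hm
  refine ⟨m.factorial * Real.exp 1, by positivity, fun x hx => ?_⟩
  have h1x : (1:ℝ) ≤ 1 + x := by linarith
  have h0x : (0:ℝ) < 1 + x := by linarith
  have hgm : g + 1 ≤ (m : ℝ) := by
    have := Nat.le_ceil g
    push_cast [hm]
    linarith
  -- (1+x)^(g+1) ≤ (1+x)^m ≤ m! * exp (1+x)
  have h2 : (1 + x) ^ (g + 1) ≤ m.factorial * Real.exp (1 + x) := by
    calc (1 + x) ^ (g + 1) ≤ (1 + x) ^ (m : ℝ) :=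
          Real.rpow_le_rpow_of_exponent_le h1x hgm
      _ = (1 + x) ^ m := by rw [Real.rpow_natCast]
      _ ≤ m.factorial * Real.exp (1 + x) := aux_pow_le_exp m (1 + x) (by linarith)
  -- rearrange
  have hpos : (0:ℝ) < (1 + x) ^ (g + 1) := Real.rpow_pos_of_pos h0x _
  have h3 : Real.exp (-x) = Real.exp 1 / Real.exp (1 + x) := by
    rw [← Real.exp_sub]; ring_nf
  rw [h3, Real.rpow_neg (le_of_lt h0x)]
  rw [div_le_iff₀ (Real.exp_pos _)]
  have h4 : (m.factorial : ℝ) * Real.exp 1 * ((1 + x) ^ (g + 1))⁻¹ * Real.exp (1 + x)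
      = (Real.exp 1 * (m.factorial * Real.exp (1 + x))) / ((1 + x) ^ (g + 1)) := by
    ring
  rw [h4, le_div_iff₀ hpos]
  calc Real.exp 1 * (1 + x) ^ (g + 1) ≤ Real.exp 1 * (m.factorial * Real.exp (1 + x)) := by
        apply mul_le_mul_of_nonneg_left h2 (le_of_lt (Real.exp_pos 1))

-- key per-step inequality:  g (b+1)^{-(g+1)} ≤ b^{-g} - (b+1)^{-g}  for b > 0
private lemma aux_step (g b : ℝ) (hg : 0 < g) (hb : 0 < b) :
    g * (b + 1) ^ (-(g + 1)) ≤ b ^ (-g) - (b + 1) ^ (-g) := by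
  set a : ℝ := b + 1 with ha
  have hapos : (0:ℝ) < a := by simp [ha]; linarith
  have hab : 0 < a / b := div_pos hapos hb
  have hlog : 1 / a ≤ Real.log (a / b) := by
    have h1 : Real.log (b / a) ≤ b / a - 1 := Real.log_le_sub_one_of_pos (div_pos hb hapos)
    have h2 : b / a - 1 = -(1 / a) := by
      rw [ha]; field_simp; ring
    have h3 : Real.log (a / b) = -Real.log (b / a) := by
      rw [← Real.log_inv]; congr 1; field_simp
    rw [h3]; rw [h2] at h1; linarith
  have hexp : 1 + g * Real.log (a / b) ≤ (a / b) ^ g := by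
    rw [Real.rpow_def_of_pos hab]
    have := Real.add_one_le_exp (Real.log (a / b) * g)
    calc 1 + g * Real.log (a / b) = Real.log (a / b) * g + 1 := by ring
      _ ≤ Real.exp (Real.log (a / b) * g) := Real.add_one_le_exp _
  have hsplit : b ^ (-g) - a ^ (-g) = a ^ (-g) * ((a / b) ^ g - 1) := by
    have h1 : (a / b) ^ g = a ^ g / b ^ g := Real.div_rpow (le_of_lt hapos) (le_of_lt hb) g
    have h2 : a ^ (-g) = (a ^ g)⁻¹ := by rw [Real.rpow_neg (le_of_lt hapos)]
    have h3 : b ^ (-g) = (b ^ g)⁻¹ := by rw [Real.rpow_neg (le_of_lt hb)]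
    have hag : (0:ℝ) < a ^ g := Real.rpow_pos_of_pos hapos _
    have hbg : (0:ℝ) < b ^ g := Real.rpow_pos_of_pos hb _
    rw [h1, h2, h3]
    field_simp
  rw [hsplit]
  have hfinal : a ^ (-(g + 1)) = a ^ (-g) * a⁻¹ := by
    rw [← Real.rpow_neg_one a, ← Real.rpow_add hapos]; ring_nf
  have hagpos : (0:ℝ) < a ^ (-g) := Real.rpow_pos_of_pos hapos _
  calc g * a ^ (-(g + 1)) = a ^ (-g) * (g * a⁻¹) := by rw [hfinal]; ring
    _ ≤ a ^ (-g) * ((a / b) ^ g - 1) := by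
        apply mul_le_mul_of_nonneg_left _ (le_of_lt hagpos)
        have : g * (1 / a) ≤ g * Real.log (a / b) :=
          mul_le_mul_of_nonneg_left hlog (le_of_lt hg)
        have h1a : g * a⁻¹ = g * (1 / a) := by rw [one_div]
        rw [h1a]
        linarith

private lemma aux_summable_shift (g t : ℝ) (hg : 0 < g) (ht : 0 ≤ t) :
    Summable (fun n : ℕ => ((n : ℝ) + 1 + t) ^ (-(g + 1))) := by
  have hbase : Summable (fun n : ℕ => ((n : ℝ) + 1) ^ (-(g + 1))) := by
    have h1 : Summable (fun n : ℕ => ((n : ℝ)) ^ (-(g + 1))) :=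
      Real.summable_nat_rpow.2 (by linarith)
    have h2 := (summable_nat_add_iff (f := fun n : ℕ => ((n : ℝ)) ^ (-(g + 1))) 1).2 h1
    refine h2.congr fun n => ?_
    push_cast
    ring_nf
  refine hbase.of_nonneg_of_le (fun n => ?_) (fun n => ?_)
  · positivity
  · apply Real.rpow_le_rpow_of_nonpos (by positivity) (by linarith) (by linarith)

private lemma aux_tail_sum (g t : ℝ) (hg : 0 < g) (ht : 0 ≤ t) :
    (∑' n : ℕ, ((n : ℝ) + 1 + t) ^ (-(g + 1))) ≤ (1 + 1 / g) * (1 + t) ^ (-g) := by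
  set f : ℕ → ℝ := fun n => ((n : ℝ) + 1 + t) ^ (-(g + 1)) with hf
  have hfnn : ∀ n, 0 ≤ f n := fun n => by simp only [hf]; positivity
  have hbnd : ∀ N : ℕ, ∑ i ∈ Finset.range N, f i ≤ (1 + 1 / g) * (1 + t) ^ (-g) := by
    intro N
    have hrhs : 0 ≤ (1 + 1 / g) * (1 + t) ^ (-g) := by positivity
    cases N with
    | zero => simpa using hrhs
    | succ M =>
      rw [Finset.sum_range_succ']
      set b : ℕ → ℝ := fun i => (1 / g) * ((i : ℝ) + 1 + t) ^ (-g) with hb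
      have hstep : ∀ i : ℕ, f (i + 1) ≤ b i - b (i + 1) := by
        intro i
        have h0 : (0:ℝ) < (i : ℝ) + 1 + t := by positivity
        have := aux_step g ((i : ℝ) + 1 + t) hg h0
        have heq1 : f (i + 1) = ((i : ℝ) + 1 + t + 1) ^ (-(g + 1)) := by
          simp only [hf]; push_cast; ring_nf
        have heq2 : b i - b (i + 1) =
            (1 / g) * (((i : ℝ) + 1 + t) ^ (-g) - ((i : ℝ) + 1 + t + 1) ^ (-g)) := by
          simp only [hb]; push_cast; ring_nf
        rw [heq1, heq2]
        rw [← sub_nonneg] at this ⊢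
        have hgne : g ≠ 0 := ne_of_gt hg
        calc (0:ℝ) ≤ (1/g) * (((i : ℝ) + 1 + t) ^ (-g) - ((i : ℝ) + 1 + t + 1) ^ (-g)
              - g * ((i : ℝ) + 1 + t + 1) ^ (-(g + 1))) := by
              apply mul_nonneg (by positivity)
              linarith
          _ = (1 / g) * (((i : ℝ) + 1 + t) ^ (-g) - ((i : ℝ) + 1 + t + 1) ^ (-g))
              - ((i : ℝ) + 1 + t + 1) ^ (-(g + 1)) := by field_simp
      have htel : ∑ i ∈ Finset.range M, f (i + 1) ≤ b 0 := by
        calc ∑ i ∈ Finset.range M, f (i + 1) ≤ ∑ i ∈ Finset.range M, (b i - b (i + 1)) :=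
              Finset.sum_le_sum fun i _ => hstep i
          _ = b 0 - b M := Finset.sum_range_sub' b M
          _ ≤ b 0 := by
              have : 0 ≤ b M := by simp only [hb]; positivity
              linarith
      have hb0 : b 0 = (1 / g) * (1 + t) ^ (-g) := by simp [hb]
      have hf0 : f 0 ≤ (1 + t) ^ (-g) := by
        simp only [hf]
        push_cast
        calc ((0:ℝ) + 1 + t) ^ (-(g + 1)) = (1 + t) ^ (-(g + 1)) := by ring_nf
          _ ≤ (1 + t) ^ (-g) :=
            Real.rpow_le_rpow_of_exponent_le (by linarith) (by linarith)
      calc ∑ i ∈ Finset.range M, f (i + 1) + f 0 ≤ b 0 + (1 + t) ^ (-g) := by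
            apply add_le_add htel hf0
        _ = (1 + 1 / g) * (1 + t) ^ (-g) := by rw [hb0]; ring
  apply Summable.tsum_le_of_sum_le (aux_summable_shift g t hg ht)
  intro s
  calc ∑ i ∈ s, f i ≤ ∑ i ∈ Finset.range (s.sup id + 1), f i := by
        apply Finset.sum_le_sum_of_subset_of_nonneg
        · intro i hi
          exact Finset.mem_range.2 (Nat.lt_succ_of_le (Finset.le_sup (f := id) hi))
        · intro i _ _; exact hfnn i
    _ ≤ _ := hbnd _

/-- decay estimate for layered environments. Each layer couples at
exponential rate `α n`; the weighted superposition satisfies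
`H(t) ≤ 2 Σ γ_n e^{-α_n t}`, and for `α_n = 1/n`, `γ_n = c n^{-γ-1}` the bound
decays like `(1+t)^{-γ}`. -/
theorem stmt6 (α γ : ℕ → ℝ) (h : ℕ → ℝ → ℝ) (c g : ℝ) (hc : 0 < c) (hg : 0 < g)
    (hα : ∀ n, 0 < α n) (hγ : ∀ n, 0 < γ n) (hγs : Summable γ)
    (hγ1 : ∑' n, γ n = 1)
    (hh : ∀ n t, 0 ≤ t → 0 ≤ h n t ∧ h n t ≤ 2 * Real.exp (-(α n) * t)) :
    (∀ t : ℝ, 0 ≤ t →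
      (∑' n, γ n * h n t) ≤ 2 * ∑' n, γ n * Real.exp (-(α n) * t))
    ∧ ((∀ n : ℕ, α n = 1 / ((n : ℝ) + 1)) →
       (∀ n : ℕ, γ n = c * ((n : ℝ) + 1) ^ (-(g + 1))) →
        ∃ C : ℝ, 0 < C ∧ ∀ t : ℝ, 0 ≤ t →
          (∑' n, γ n * Real.exp (-(α n) * t)) ≤ C * (1 + t) ^ (-g)) := by
  have hexp_le_one : ∀ (n : ℕ) (t : ℝ), 0 ≤ t → Real.exp (-(α n) * t) ≤ 1 := by
    intro n t ht
    rw [← Real.exp_zero]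
    apply Real.exp_le_exp.2
    have := (hα n).le
    nlinarith
  have hsum_exp : ∀ t : ℝ, 0 ≤ t → Summable (fun n => γ n * Real.exp (-(α n) * t)) := by
    intro t ht
    refine hγs.of_nonneg_of_le (fun n => ?_) (fun n => ?_)
    · exact mul_nonneg (hγ n).le (Real.exp_nonneg _)
    · calc γ n * Real.exp (-(α n) * t) ≤ γ n * 1 :=
            mul_le_mul_of_nonneg_left (hexp_le_one n t ht) (hγ n).le
        _ = γ n := mul_one _
  constructor
  · intro t ht
    have hs2 := hsum_exp t ht
    have hle : ∀ n, γ n * h n t ≤ 2 * (γ n * Real.exp (-(α n) * t)) := by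
      intro n
      have := (hh n t ht).2
      calc γ n * h n t ≤ γ n * (2 * Real.exp (-(α n) * t)) :=
            mul_le_mul_of_nonneg_left this (hγ n).le
        _ = 2 * (γ n * Real.exp (-(α n) * t)) := by ring
    have hs1 : Summable (fun n => γ n * h n t) := by
      refine (hs2.mul_left 2).of_nonneg_of_le (fun n => ?_) hle
      exact mul_nonneg (hγ n).le (hh n t ht).1
    calc (∑' n, γ n * h n t) ≤ ∑' n, 2 * (γ n * Real.exp (-(α n) * t)) :=
          Summable.tsum_le_tsum hle hs1 (hs2.mul_left 2)
      _ = 2 * ∑' n, γ n * Real.exp (-(α n) * t) := tsum_mul_left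
  · intro hα' hγ'
    obtain ⟨K, hK, hKe⟩ := aux_exp_decay g hg
    refine ⟨c * K * (1 + 1 / g), by positivity, fun t ht => ?_⟩
    have hterm : ∀ n : ℕ, γ n * Real.exp (-(α n) * t)
        ≤ c * K * (((n : ℝ) + 1 + t) ^ (-(g + 1))) := by
      intro n
      have hn1 : (0:ℝ) < (n : ℝ) + 1 := by positivity
      have hx : (0:ℝ) ≤ t / ((n : ℝ) + 1) := by positivity
      have he : Real.exp (-(α n) * t) ≤ K * (1 + t / ((n : ℝ) + 1)) ^ (-(g + 1)) := by
        have h1 : -(α n) * t = -(t / ((n : ℝ) + 1)) := by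
          rw [hα' n]; field_simp
        rw [h1]
        exact hKe _ hx
      have hmul : ((n : ℝ) + 1) ^ (-(g + 1)) * (1 + t / ((n : ℝ) + 1)) ^ (-(g + 1))
          = ((n : ℝ) + 1 + t) ^ (-(g + 1)) := by
        rw [← Real.mul_rpow hn1.le (by positivity)]
        congr 1
        field_simp
      calc γ n * Real.exp (-(α n) * t)
          ≤ (c * ((n : ℝ) + 1) ^ (-(g + 1))) * (K * (1 + t / ((n : ℝ) + 1)) ^ (-(g + 1))) := by
            rw [hγ' n]
            apply mul_le_mul_of_nonneg_left he (by positivity)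
        _ = c * K * (((n : ℝ) + 1) ^ (-(g + 1)) * (1 + t / ((n : ℝ) + 1)) ^ (-(g + 1))) := by
            ring
        _ = c * K * (((n : ℝ) + 1 + t) ^ (-(g + 1))) := by rw [hmul]
    have hs3 : Summable (fun n : ℕ => c * K * (((n : ℝ) + 1 + t) ^ (-(g + 1)))) :=
      (aux_summable_shift g t hg ht).mul_left _
    calc (∑' n, γ n * Real.exp (-(α n) * t))
        ≤ ∑' n : ℕ, c * K * (((n : ℝ) + 1 + t) ^ (-(g + 1))) :=
          Summable.tsum_le_tsum hterm (hsum_exp t ht) hs3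
      _ = c * K * ∑' n : ℕ, ((n : ℝ) + 1 + t) ^ (-(g + 1)) := tsum_mul_left
      _ ≤ c * K * ((1 + 1 / g) * (1 + t) ^ (-g)) := by
          apply mul_le_mul_of_nonneg_left (aux_tail_sum g t hg ht) (by positivity)
      _ = c * K * (1 + 1 / g) * (1 + t) ^ (-g) := by ring
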